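/- Let V be a real Hilbert space, V_n a finite-dimensional subspace and W_m a complete subspace of V with β := β(V_n, W_m) > 0. For ω ∈ W_m let v*(ω) := (P_{V_n}∘P_{W_m}|_{V_n})^{-1}(P_{V_n} ω) ∈ V_n. Then for every u ∈ V, ‖u − v*(P_{W_m} u)‖ ≤ (1/β) · dist(u, V_n), where dist(u, V_n) := inf_{v∈V_n} ‖u − v‖. -/

import Mathlib

open scoped RealInnerProductSpace

/-- Pure real-number arithmetic behind the PBDW bound. -/
lemma stmt4_aux1 (β A B Q E : ℝ) (hβ : 0 < β) (hβ1 : β ≤ 1) (hA0 : 0 ≤ A) (hB0 : 0 ≤ B)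
    (hQ0 : 0 ≤ Q) (hE0 : 0 ≤ E) (hpyth : E ^ 2 = A ^ 2 + B ^ 2) (hβA : β * A ≤ Q)
    (hQA : Q ≤ A) (hCS : (A ^ 2 * Q ^ 2) ^ 2 ≤ B ^ 2 * (A ^ 4 * Q ^ 2 - A ^ 2 * Q ^ 4)) :
    β * E ≤ B := by
  have hkey : β ^ 2 * E ^ 2 ≤ B ^ 2 := by
    rcases eq_or_lt_of_le hA0 with hA0' | hApos
    · have hAz : A = 0 := hA0'.symm
      have hβsq : β ^ 2 ≤ 1 := by nlinarith
      have hEB : E ^ 2 = B ^ 2 := by rw [hpyth, hAz]; ring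
      have h1 : β ^ 2 * B ^ 2 ≤ 1 * B ^ 2 :=
        mul_le_mul_of_nonneg_right hβsq (sq_nonneg B)
      have h2 : β ^ 2 * E ^ 2 = β ^ 2 * B ^ 2 := by rw [hEB]
      linarith
    · have hQpos : 0 < Q := lt_of_lt_of_le (by positivity) hβA
      have hAQpos : 0 < A ^ 2 * Q ^ 2 := by positivity
      have step1 : A ^ 2 * Q ^ 2 ≤ B ^ 2 * (A ^ 2 - Q ^ 2) := by
        have h' : (A ^ 2 * Q ^ 2) * (A ^ 2 * Q ^ 2)
            ≤ (B ^ 2 * (A ^ 2 - Q ^ 2)) * (A ^ 2 * Q ^ 2) := by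
          calc (A ^ 2 * Q ^ 2) * (A ^ 2 * Q ^ 2) = (A ^ 2 * Q ^ 2) ^ 2 := by ring
            _ ≤ B ^ 2 * (A ^ 4 * Q ^ 2 - A ^ 2 * Q ^ 4) := hCS
            _ = (B ^ 2 * (A ^ 2 - Q ^ 2)) * (A ^ 2 * Q ^ 2) := by ring
        exact le_of_mul_le_mul_right h' hAQpos
      have step2 : β ^ 2 * A ^ 2 ≤ Q ^ 2 := by
        have := mul_le_mul hβA hβA (by positivity) hQ0
        nlinarith
      have step3 : β ^ 2 * A ^ 2 ≤ B ^ 2 * (1 - β ^ 2) := by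
        have h1 : β ^ 2 * A ^ 2 * A ^ 2 ≤ Q ^ 2 * A ^ 2 :=
          mul_le_mul_of_nonneg_right step2 (by positivity)
        have h2 : B ^ 2 * (β ^ 2 * A ^ 2) ≤ B ^ 2 * Q ^ 2 :=
          mul_le_mul_of_nonneg_left step2 (by positivity)
        have h3 : (β ^ 2 * A ^ 2 - B ^ 2 * (1 - β ^ 2)) * A ^ 2 ≤ 0 := by nlinarith
        nlinarith [mul_pos hApos hApos]
      nlinarith
  nlinarith [mul_nonneg hβ.le hE0]

/-- From a Pythagorean identity, a component is at most the norm. -/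
lemma stmt4_aux2 (x B C : ℝ) (hx : 0 ≤ x) (hB : 0 ≤ B) (h : x ^ 2 = B ^ 2 + C ^ 2) :
    B ≤ x := by nlinarith

/-- The bound `‖u − v*(P_{W_m} u)‖ ≤ (1/β) · dist(u, V_n)` for the
`V_n`-component `v*` of the PBDW reconstruction, `v*(ω)` being characterized by
`P_{V_n}(P_{W_m} v*(ω)) = P_{V_n} ω`, here with `ω = P_{W_m} u`. -/
theorem stmt4 {V : Type*} [NormedAddCommGroup V] [InnerProductSpace ℝ V]
    (Vn Wm : Submodule ℝ V) [FiniteDimensional ℝ Vn] [CompleteSpace Wm]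
    (β : ℝ)
    (hβdef : β = sInf {r : ℝ | ∃ v ∈ Vn, v ≠ 0 ∧
      r = ‖(Submodule.orthogonalProjectionOnto Wm v : V)‖ / ‖v‖})
    (hβ : 0 < β)
    (u : V) (vstar : Vn)
    (hvstar : Submodule.orthogonalProjectionOnto Vn ((Submodule.orthogonalProjectionOnto Wm (vstar : V) : V))
      = Submodule.orthogonalProjectionOnto Vn ((Submodule.orthogonalProjectionOnto Wm u : V))) :
    ‖u - (vstar : V)‖ ≤ (1 / β) * Metric.infDist u (Vn : Set V) := by
  set S : Set ℝ := {r : ℝ | ∃ v ∈ Vn, v ≠ 0 ∧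
      r = ‖(Submodule.orthogonalProjectionOnto Wm v : V)‖ / ‖v‖} with hS
  have hbdd : BddBelow S := by
    refine ⟨0, fun r hr => ?_⟩
    obtain ⟨v, hv, hv0, rfl⟩ := hr
    positivity
  have hproj_le : ∀ x : V, ‖(Submodule.orthogonalProjectionOnto Wm x : V)‖ ≤ ‖x‖ := by
    intro x
    have h1 : ‖Submodule.orthogonalProjectionOnto Wm x‖ ≤ ‖Submodule.orthogonalProjectionOnto Wm‖ * ‖x‖ :=
      (Submodule.orthogonalProjectionOnto Wm).le_opNorm x
    have h2 : ‖Submodule.orthogonalProjectionOnto Wm‖ ≤ 1 := Submodule.orthogonalProjectionOnto_norm_le Wm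
    have h3 : (0:ℝ) ≤ ‖x‖ := norm_nonneg x
    calc ‖(Submodule.orthogonalProjectionOnto Wm x : V)‖ = ‖Submodule.orthogonalProjectionOnto Wm x‖ := rfl
      _ ≤ ‖Submodule.orthogonalProjectionOnto Wm‖ * ‖x‖ := h1
      _ ≤ 1 * ‖x‖ := by nlinarith
      _ = ‖x‖ := one_mul _
  have hle : ∀ v : V, v ∈ Vn → β * ‖v‖ ≤ ‖(Submodule.orthogonalProjectionOnto Wm v : V)‖ := by
    intro v hv
    rcases eq_or_ne v 0 with rfl | hv0
    · simp
    · have hmem : ‖(Submodule.orthogonalProjectionOnto Wm v : V)‖ / ‖v‖ ∈ S := ⟨v, hv, hv0, rfl⟩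
      have hβr : β ≤ ‖(Submodule.orthogonalProjectionOnto Wm v : V)‖ / ‖v‖ := hβdef ▸ csInf_le hbdd hmem
      have hvpos : (0:ℝ) < ‖v‖ := norm_pos_iff.mpr hv0
      calc β * ‖v‖ ≤ (‖(Submodule.orthogonalProjectionOnto Wm v : V)‖ / ‖v‖) * ‖v‖ :=
            mul_le_mul_of_nonneg_right hβr hvpos.le
        _ = ‖(Submodule.orthogonalProjectionOnto Wm v : V)‖ := by field_simp
  have hβ1 : β ≤ 1 := by
    rcases S.eq_empty_or_nonempty with hemp | ⟨r, v, hv, hv0, hr⟩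
    · exfalso
      rw [hβdef, hemp, Real.sInf_empty] at hβ
      exact lt_irrefl 0 hβ
    · have h1 : β ≤ r := hβdef ▸ csInf_le hbdd ⟨v, hv, hv0, hr⟩
      have hvpos : (0:ℝ) < ‖v‖ := norm_pos_iff.mpr hv0
      have h2 : r ≤ 1 := by rw [hr, div_le_one hvpos]; exact hproj_le v
      linarith
  -- main objects
  set η : V := u - (vstar : V) with hη
  set a : V := (Submodule.orthogonalProjectionOnto Vn η : V) with ha
  set b : V := η - a with hb
  set q : V := (Submodule.orthogonalProjectionOnto Wm a : V) with hq
  have haVn : a ∈ Vn := (Submodule.orthogonalProjectionOnto Vn η).2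
  have hbperp : b ∈ Vnᗮ := Submodule.sub_starProjection_mem_orthogonal (K := Vn) η
  have hQη : (Submodule.orthogonalProjectionOnto Wm η : V) ∈ Vnᗮ := by
    rw [← Submodule.orthogonalProjectionOnto_eq_zero_iff (K := Vn)]
    have hsplit : Submodule.orthogonalProjectionOnto Wm η
        = Submodule.orthogonalProjectionOnto Wm u - Submodule.orthogonalProjectionOnto Wm (vstar : V) := by
      rw [hη, map_sub]
    have hco : (Submodule.orthogonalProjectionOnto Wm η : V)
        = (Submodule.orthogonalProjectionOnto Wm u : V) - (Submodule.orthogonalProjectionOnto Wm (vstar : V) : V) := by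
      rw [hsplit]; rfl
    rw [hco, map_sub, hvstar, sub_self]
  -- inner product facts
  have hηq : ⟪η, q⟫ = 0 := by
    have h1 : ⟪((Submodule.orthogonalProjectionOnto Wm η : V) : V), a⟫
        = ⟪η, ((Submodule.orthogonalProjectionOnto Wm a : V) : V)⟫ := by
      have := Submodule.inner_starProjection_left_eq_right (𝕜 := ℝ) (K := Wm) η a
      simpa using this
    have h2 : ⟪a, ((Submodule.orthogonalProjectionOnto Wm η : V) : V)⟫ = 0 :=
      (Submodule.mem_orthogonal _ _).mp hQη a haVn
    rw [hq, ← h1, real_inner_comm]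
    exact h2
  have haq : ⟪a, q⟫ = ‖q‖ ^ 2 := by
    have h1 : ⟪a - (Submodule.orthogonalProjectionOnto Wm a : V), q⟫ = 0 :=
      Submodule.starProjection_inner_eq_zero (K := Wm) a q (Submodule.orthogonalProjectionOnto Wm a).2
    have h2 : ⟪a, q⟫ - ⟪(Submodule.orthogonalProjectionOnto Wm a : V), q⟫ = 0 := by
      rw [← inner_sub_left]; exact h1
    rw [← hq, real_inner_self_eq_norm_sq] at h2
    linarith
  have hbq : ⟪b, q⟫ = -‖q‖ ^ 2 := by
    have h1 : ⟪b, q⟫ = ⟪η, q⟫ - ⟪a, q⟫ := by rw [hb, inner_sub_left]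
    rw [h1, hηq, haq]; ring
  have hba : ⟪b, a⟫ = 0 := by
    rw [real_inner_comm]
    exact (Submodule.mem_orthogonal _ _).mp hbperp a haVn
  -- Pythagoras
  have hpyth : ‖η‖ ^ 2 = ‖a‖ ^ 2 + ‖b‖ ^ 2 := by
    have hηab : η = a + b := by rw [hb]; abel
    rw [hηab, norm_add_sq_real, real_inner_comm b a, hba]; ring
  -- refined Cauchy–Schwarz inequality
  have hCS : (‖a‖ ^ 2 * ‖q‖ ^ 2) ^ 2 ≤ ‖b‖ ^ 2 * (‖a‖ ^ 4 * ‖q‖ ^ 2 - ‖a‖ ^ 2 * ‖q‖ ^ 4) := by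
    set c : V := (‖a‖ ^ 2) • q - (‖q‖ ^ 2) • a with hc
    have hbc : ⟪b, c⟫ = -(‖a‖ ^ 2 * ‖q‖ ^ 2) := by
      rw [hc, inner_sub_right, real_inner_smul_right, real_inner_smul_right, hbq, hba]; ring
    have hqa' : ⟪q, a⟫ = ‖q‖ ^ 2 := by rw [real_inner_comm]; exact haq
    have hcc : ‖c‖ ^ 2 = ‖a‖ ^ 4 * ‖q‖ ^ 2 - ‖a‖ ^ 2 * ‖q‖ ^ 4 := by
      have h0 : ‖c‖ ^ 2 = ⟪c, c⟫ := (real_inner_self_eq_norm_sq c).symm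
      rw [h0, hc]
      simp only [inner_sub_left, inner_sub_right, real_inner_smul_left, real_inner_smul_right]
      rw [real_inner_self_eq_norm_sq, real_inner_self_eq_norm_sq, haq, hqa']
      ring
    have hCS1 : ‖a‖ ^ 2 * ‖q‖ ^ 2 ≤ ‖b‖ * ‖c‖ := by
      have h1 : ⟪b, -c⟫ ≤ ‖b‖ * ‖-c‖ := real_inner_le_norm b (-c)
      rw [inner_neg_right, hbc, norm_neg] at h1
      simpa using h1
    have hbc0 : 0 ≤ ‖b‖ * ‖c‖ := by positivity
    calc (‖a‖ ^ 2 * ‖q‖ ^ 2) ^ 2 ≤ (‖b‖ * ‖c‖) ^ 2 := by nlinarith [sq_nonneg (‖a‖ * ‖q‖)]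
      _ = ‖b‖ ^ 2 * ‖c‖ ^ 2 := by ring
      _ = ‖b‖ ^ 2 * (‖a‖ ^ 4 * ‖q‖ ^ 2 - ‖a‖ ^ 2 * ‖q‖ ^ 4) := by rw [hcc]
  -- apply the arithmetic lemma
  have hβE : β * ‖η‖ ≤ ‖b‖ :=
    stmt4_aux1 β ‖a‖ ‖b‖ ‖q‖ ‖η‖ hβ hβ1 (norm_nonneg _) (norm_nonneg _) (norm_nonneg _)
      (norm_nonneg _) hpyth (hle a haVn) (hproj_le a) hCS
  -- ‖b‖ ≤ infDist
  have hbd : ‖b‖ ≤ Metric.infDist u (Vn : Set V) := by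
    refine le_of_not_gt fun hlt => ?_
    obtain ⟨y, hy, hdy⟩ := (Metric.infDist_lt_iff ⟨0, Vn.zero_mem⟩).mp hlt
    have hyVn : y ∈ Vn := hy
    set c' : V := a + (vstar : V) - y with hc'
    have hc'Vn : c' ∈ Vn :=
      Submodule.sub_mem _ (Submodule.add_mem _ haVn vstar.2) hyVn
    have hdecomp : u - y = b + c' := by rw [hb, hc', hη]; abel
    have hbc' : ⟪b, c'⟫ = 0 := by
      rw [real_inner_comm]
      exact (Submodule.mem_orthogonal _ _).mp hbperp c' hc'Vn
    have hnorm : ‖u - y‖ ^ 2 = ‖b‖ ^ 2 + ‖c'‖ ^ 2 := by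
      rw [hdecomp, norm_add_sq_real, hbc']; ring
    have h1 : ‖b‖ ≤ ‖u - y‖ :=
      stmt4_aux2 _ _ _ (norm_nonneg _) (norm_nonneg _) hnorm
    rw [dist_eq_norm] at hdy
    linarith
  -- conclude
  have hfin : ‖η‖ * β ≤ Metric.infDist u (Vn : Set V) := by
    rw [mul_comm]; linarith
  have hend : ‖η‖ ≤ Metric.infDist u (Vn : Set V) / β := (le_div_iff₀ hβ).mpr hfin
  calc ‖u - (vstar : V)‖ = ‖η‖ := by rw [hη]
    _ ≤ Metric.infDist u (Vn : Set V) / β := hend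
    _ = (1 / β) * Metric.infDist u (Vn : Set V) := by ring
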